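/- Let s_0, s_1, s_2 be positive real numbers, N = s_0 + s_1 + s_2, let P = N·conv{(0,0), (1,0), (0,1)} ⊂ ℝ² and u = (s_1, s_2). Then 2·vol((P − u)°) = 1/(s_0 s_1) + 1/(s_0 s_2) + 1/(s_1 s_2), where vol is the 2-dimensional Lebesgue measure and (P − u)° = {y ∈ ℝ² : ⟨y, z⟩ ≤ 1 for all z ∈ P − u} is the polar dual of the translated triangle P − u. -/

import Mathlib

open scoped BigOperators Pointwise

noncomputable section

open MeasureTheory Set

/-- Measurability of the closed corner triangle in `ℝ × ℝ`. -/
lemma cornerTri_measurable :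
    MeasurableSet {p : ℝ × ℝ | 0 ≤ p.1 ∧ 0 ≤ p.2 ∧ p.1 + p.2 ≤ 1} := by
  apply MeasurableSet.inter
  · exact measurableSet_le measurable_const measurable_fst
  apply MeasurableSet.inter
  · exact measurableSet_le measurable_const measurable_snd
  · exact measurableSet_le (measurable_fst.add measurable_snd) measurable_const

/-- Area of the closed corner triangle in `ℝ × ℝ` is `1/2`. -/
lemma cornerTri_volume :
    (volume ({p : ℝ × ℝ | 0 ≤ p.1 ∧ 0 ≤ p.2 ∧ p.1 + p.2 ≤ 1})) = ENNReal.ofReal (1/2) := by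
  have hmeas := cornerTri_measurable
  rw [MeasureTheory.Measure.volume_eq_prod, Measure.prod_apply hmeas]
  have hslice : ∀ x : ℝ, volume (Prod.mk x ⁻¹' {p : ℝ × ℝ | 0 ≤ p.1 ∧ 0 ≤ p.2 ∧ p.1 + p.2 ≤ 1})
      = (Icc (0:ℝ) 1).indicator (fun x => ENNReal.ofReal (1 - x)) x := by
    intro x
    by_cases hx : x ∈ Icc (0:ℝ) 1
    · rw [indicator_of_mem hx]
      have : Prod.mk x ⁻¹' {p : ℝ × ℝ | 0 ≤ p.1 ∧ 0 ≤ p.2 ∧ p.1 + p.2 ≤ 1} = Icc 0 (1 - x) := by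
        ext y; simp only [mem_preimage, mem_setOf_eq, mem_Icc]
        constructor
        · rintro ⟨_, h2, h3⟩; exact ⟨h2, by linarith⟩
        · rintro ⟨h2, h3⟩; exact ⟨hx.1, h2, by linarith⟩
      rw [this, Real.volume_Icc]; norm_num
    · rw [indicator_of_notMem hx]
      have : Prod.mk x ⁻¹' {p : ℝ × ℝ | 0 ≤ p.1 ∧ 0 ≤ p.2 ∧ p.1 + p.2 ≤ 1} = ∅ := by
        ext y; simp only [mem_preimage, mem_setOf_eq, mem_empty_iff_false, iff_false]
        rintro ⟨h1, h2, h3⟩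
        simp only [mem_Icc, not_and_or, not_le] at hx
        rcases hx with h | h <;> linarith
      rw [this, measure_empty]
  simp_rw [hslice]
  rw [lintegral_indicator measurableSet_Icc]
  rw [← ofReal_integral_eq_lintegral_ofReal]
  · congr 1
    rw [integral_Icc_eq_integral_Ioc, ← intervalIntegral.integral_of_le (by norm_num : (0:ℝ) ≤ 1)]
    have : ∫ x in (0:ℝ)..1, (1 - x) = 1/2 := by
      rw [intervalIntegral.integral_sub (intervalIntegrable_const (c := 1)) intervalIntegral.intervalIntegrable_id]
      simp [integral_id]
      norm_num
    rw [this]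
  · exact (continuous_const.sub continuous_id).integrableOn_Icc
  · filter_upwards [self_mem_ae_restrict measurableSet_Icc] with x hx
    simp only [mem_Icc] at hx
    simp only [Pi.zero_apply]
    linarith [hx.2]

/-- The polar dual `S° = {y : ⟨y,z⟩ ≤ 1 for all z ∈ S}` in the plane. -/
def polarDual2 (S : Set (Fin 2 → ℝ)) : Set (Fin 2 → ℝ) :=
  {y | ∀ z ∈ S, y 0 * z 0 + y 1 * z 1 ≤ 1}

set_option maxHeartbeats 2000000

/-- For `P = (s₀+s₁+s₂)·conv{(0,0),(1,0),(0,1)}` and `u = (s₁,s₂)`, the normalized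
area of the polar dual `(P-u)°` equals `1/(s₀s₁) + 1/(s₀s₂) + 1/(s₁s₂)`. -/
theorem stmt16 (s0 s1 s2 : ℝ) (h0 : 0 < s0) (h1 : 0 < s1) (h2 : 0 < s2) :
    2 * (MeasureTheory.volume
      (polarDual2 ((fun z => z - ![s1, s2]) ''
        ((s0 + s1 + s2) •
          (convexHull ℝ {![0, 0], ![1, 0], ![0, 1]} : Set (Fin 2 → ℝ)))))).toReal =
    1 / (s0 * s1) + 1 / (s0 * s2) + 1 / (s1 * s2) := by
  set N : ℝ := s0 + s1 + s2 with hN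
  have hNpos : 0 < N := by positivity
  set u : Fin 2 → ℝ := ![s1, s2] with hu
  set V : Set (Fin 2 → ℝ) := {![0, 0], ![1, 0], ![0, 1]} with hV
  set w0 : Fin 2 → ℝ := ![-s1, -s2] with hw0
  set w1 : Fin 2 → ℝ := ![s0 + s2, -s2] with hw1
  set w2 : Fin 2 → ℝ := ![-s1, s0 + s1] with hw2
  -- Step A : the translated scaled triangle is a convex hull of three vertices
  have hstepA : (fun z => z - u) '' (N • (convexHull ℝ V : Set (Fin 2 → ℝ)))
      = convexHull ℝ {w0, w1, w2} := by
    have hsm : N • (convexHull ℝ V : Set (Fin 2 → ℝ)) = convexHull ℝ (N • V) :=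
      (convexHull_smul N V).symm
    have hf : (fun z : Fin 2 → ℝ => z - u)
        = ⇑((AffineEquiv.constVAdd ℝ (Fin 2 → ℝ) (-u)).toAffineMap) := by
      funext z
      show z - u = -u +ᵥ z
      simp [sub_eq_neg_add, vadd_eq_add]
    rw [hsm, hf, AffineMap.image_convexHull]
    congr 1
    rw [hV]
    rw [Set.smul_set_insert, Set.smul_set_insert, Set.smul_set_singleton]
    rw [Set.image_insert_eq, Set.image_insert_eq, Set.image_singleton]
    have e0 : (AffineEquiv.constVAdd ℝ (Fin 2 → ℝ) (-u)).toAffineMap (N • ![(0:ℝ), 0]) = w0 := by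
      show -u +ᵥ (N • ![(0:ℝ), 0]) = w0
      funext i
      fin_cases i <;> simp [hu, hw0, vadd_eq_add] <;> ring
    have e1 : (AffineEquiv.constVAdd ℝ (Fin 2 → ℝ) (-u)).toAffineMap (N • ![(1:ℝ), 0]) = w1 := by
      show -u +ᵥ (N • ![(1:ℝ), 0]) = w1
      funext i
      fin_cases i <;> simp [hu, hw1, hN, vadd_eq_add] <;> ring
    have e2 : (AffineEquiv.constVAdd ℝ (Fin 2 → ℝ) (-u)).toAffineMap (N • ![(0:ℝ), 1]) = w2 := by
      show -u +ᵥ (N • ![(0:ℝ), 1]) = w2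
      funext i
      fin_cases i <;> simp [hu, hw2, hN, vadd_eq_add] <;> ring
    rw [e0, e1, e2]
  -- Step B : polar dual of the hull is given by three linear inequalities
  have hstepB : polarDual2 (convexHull ℝ {w0, w1, w2})
      = {y : Fin 2 → ℝ | -s1 * y 0 - s2 * y 1 ≤ 1 ∧ (s0 + s2) * y 0 - s2 * y 1 ≤ 1 ∧
          -s1 * y 0 + (s0 + s1) * y 1 ≤ 1} := by
    ext y
    simp only [polarDual2, mem_setOf_eq]
    constructor
    · intro h
      have m0 : w0 ∈ convexHull ℝ {w0, w1, w2} :=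
        subset_convexHull ℝ _ (by simp)
      have m1 : w1 ∈ convexHull ℝ {w0, w1, w2} :=
        subset_convexHull ℝ _ (by simp)
      have m2 : w2 ∈ convexHull ℝ {w0, w1, w2} :=
        subset_convexHull ℝ _ (by simp)
      have g0 := h w0 m0
      have g1 := h w1 m1
      have g2 := h w2 m2
      simp only [hw0, hw1, hw2, Matrix.cons_val_zero, Matrix.cons_val_one, Matrix.head_cons]
        at g0 g1 g2
      refine ⟨by linarith, by linarith, by linarith⟩
    · rintro ⟨c0, c1, c2⟩ z hz
      have hconv : Convex ℝ {z : Fin 2 → ℝ | y 0 * z 0 + y 1 * z 1 ≤ 1} := by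
        intro p hp q hq a b ha hb hab
        simp only [mem_setOf_eq] at hp hq ⊢
        have e0 : (a • p + b • q) 0 = a * p 0 + b * q 0 := by simp
        have e1 : (a • p + b • q) 1 = a * p 1 + b * q 1 := by simp
        rw [e0, e1]
        nlinarith [mul_le_mul_of_nonneg_left hp ha, mul_le_mul_of_nonneg_left hq hb]
      have hsub : convexHull ℝ {w0, w1, w2} ⊆ {z : Fin 2 → ℝ | y 0 * z 0 + y 1 * z 1 ≤ 1} := by
        apply convexHull_min _ hconv
        intro v hv
        simp only [mem_insert_iff, mem_singleton_iff] at hv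
        rcases hv with rfl | rfl | rfl <;>
          simp only [mem_setOf_eq, hw0, hw1, hw2, Matrix.cons_val_zero, Matrix.cons_val_one,
            Matrix.head_cons] <;> linarith
      exact hsub hz
  -- The standard corner triangle in `Fin 2 → ℝ`
  set e : (Fin 2 → ℝ) ≃ᵐ (ℝ × ℝ) := MeasurableEquiv.piFinTwo (fun _ => ℝ) with he
  set T : Set (Fin 2 → ℝ) := e ⁻¹' {p : ℝ × ℝ | 0 ≤ p.1 ∧ 0 ≤ p.2 ∧ p.1 + p.2 ≤ 1} with hT
  have hTmem : ∀ x : Fin 2 → ℝ, x ∈ T ↔ 0 ≤ x 0 ∧ 0 ≤ x 1 ∧ x 0 + x 1 ≤ 1 := by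
    intro x; rw [hT]; rfl
  have hTvol : volume T = ENNReal.ofReal (1/2) := by
    rw [hT, (volume_preserving_piFinTwo (fun _ => ℝ)).measure_preimage
      cornerTri_measurable.nullMeasurableSet, cornerTri_volume]
  -- The affine parametrization
  set F : (Fin 2 → ℝ) → (Fin 2 → ℝ) := fun x =>
    ![-(x 0) / s1 + x 1 / s0, x 0 / s2 + x 1 / s0 + x 1 / s2 - 1 / s2] with hF
  -- Step C : the inequality region is the image of T under F
  have hstepC : {y : Fin 2 → ℝ | -s1 * y 0 - s2 * y 1 ≤ 1 ∧ (s0 + s2) * y 0 - s2 * y 1 ≤ 1 ∧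
      -s1 * y 0 + (s0 + s1) * y 1 ≤ 1} = F '' T := by
    ext y
    simp only [mem_setOf_eq, mem_image]
    constructor
    · rintro ⟨cA, cB, cC⟩
      refine ⟨![s1 * (1 + s2 * y 1 - (s0 + s2) * y 0) / N,
        s0 * (1 + s1 * y 0 + s2 * y 1) / N], ?_, ?_⟩
      · rw [hTmem]
        simp only [Matrix.cons_val_zero, Matrix.cons_val_one, Matrix.head_cons]
        refine ⟨?_, ?_, ?_⟩
        · apply div_nonneg _ hNpos.le
          apply mul_nonneg h1.le
          linarith
        · apply div_nonneg _ hNpos.le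
          apply mul_nonneg h0.le
          linarith
        · rw [← add_div, div_le_one hNpos]
          nlinarith [mul_le_mul_of_nonneg_left cC h2.le]
      · funext i
        fin_cases i <;>
          simp only [hF, Fin.zero_eta, Fin.mk_one, Matrix.cons_val_zero, Matrix.cons_val_one,
            Matrix.head_cons] <;>
          (field_simp; ring)
    · rintro ⟨x, hx, rfl⟩
      rw [hTmem] at hx
      obtain ⟨hx0, hx1, hxs⟩ := hx
      simp only [hF, Matrix.cons_val_zero, Matrix.cons_val_one, Matrix.head_cons]
      refine ⟨?_, ?_, ?_⟩
      · have key : -s1 * (-(x 0) / s1 + x 1 / s0)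
            - s2 * (x 0 / s2 + x 1 / s0 + x 1 / s2 - 1 / s2) = 1 - x 1 * N / s0 := by
          field_simp; ring
        rw [key]
        have : 0 ≤ x 1 * N / s0 := by positivity
        linarith
      · have key : (s0 + s2) * (-(x 0) / s1 + x 1 / s0)
            - s2 * (x 0 / s2 + x 1 / s0 + x 1 / s2 - 1 / s2) = 1 - x 0 * N / s1 := by
          field_simp; ring
        rw [key]
        have : 0 ≤ x 0 * N / s1 := by positivity
        linarith
      · have key : -s1 * (-(x 0) / s1 + x 1 / s0)
            + (s0 + s1) * (x 0 / s2 + x 1 / s0 + x 1 / s2 - 1 / s2)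
            = (x 0 + x 1) * N / s2 - (N - s2) / s2 := by
          field_simp; ring
        rw [key]
        have hle : (x 0 + x 1) * N / s2 ≤ N / s2 := by
          apply (div_le_div_iff_of_pos_right h2).mpr
          nlinarith
        have : (N : ℝ) / s2 - (N - s2) / s2 = 1 := by field_simp; ring
        linarith
  -- Step D : decompose F as translation ∘ linear map and compute the volume
  set M : Matrix (Fin 2) (Fin 2) ℝ := !![-1/s1, 1/s0; 1/s2, 1/s0 + 1/s2] with hM
  set A : Fin 2 → ℝ := ![0, -1/s2] with hA
  have hFdecomp : F = (fun v => A + v) ∘ (Matrix.toLin' M) := by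
    funext x
    funext i
    fin_cases i <;>
      simp [hF, hA, hM, Matrix.toLin'_apply, Matrix.mulVec, dotProduct,
        Fin.sum_univ_two] <;> ring
  set Δ : ℝ := 1 / (s0 * s1) + 1 / (s0 * s2) + 1 / (s1 * s2) with hΔ
  have hΔpos : 0 < Δ := by positivity
  have hdet : M.det = -Δ := by
    rw [hM, Matrix.det_fin_two_of, hΔ]
    field_simp
    ring
  have hvolF : volume (F '' T) = ENNReal.ofReal Δ * ENNReal.ofReal (1/2) := by
    rw [hFdecomp, Set.image_comp]
    have htr : (fun v => A + v) '' (Matrix.toLin' M '' T) = A +ᵥ (Matrix.toLin' M '' T) := rfl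
    rw [htr]
    rw [measure_vadd]
    rw [Measure.addHaar_image_linearMap]
    rw [LinearMap.det_toLin']
    rw [hdet, abs_neg, abs_of_pos hΔpos, hTvol]
  -- Assemble
  rw [hstepA, hstepB, hstepC, hvolF]
  rw [ENNReal.toReal_mul, ENNReal.toReal_ofReal hΔpos.le, ENNReal.toReal_ofReal (by norm_num)]
  rw [hΔ]
  ring

end
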